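/- arXiv:2405.07811 — 5 statements merged into one kernel-verified Lean document; each statement's English description precedes it below -/
import Mathlib

section
/- For all natural numbers m and l with l ≤ m, the Gram coefficient satisfies the closed formula a_{m−l, m+l} = (−1)^l · T^{−1/2} · 2^{−2m − 1/2} · (2m)! / ( m! · √((m−l)! · (m+l)!) ). -/
open Real MeasureTheory Matrix Filter

/-- Physicists' Hermite polynomials: H_0 = 1, H_1 = 2x, H_{n+1} = 2x H_n - 2n H_{n-1}. -/
noncomputable def hermiteH : ℕ → ℝ → ℝ
  | 0, _ => 1
  | 1, x => 2 * x
  | (n + 2), x => 2 * x * hermiteH (n + 1) x - 2 * (n + 1) * hermiteH n x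

/-- Asymmetric Hermite basis function ψ_m. -/
noncomputable def psi (T : ℝ) (m : ℕ) (v : ℝ) : ℝ :=
  Real.exp (-v ^ 2 / T) * T ^ (-(1 : ℝ) / 2) *
    ((2 : ℝ) ^ m * (Nat.factorial m : ℝ) * Real.sqrt π) ^ (-(1 : ℝ) / 2) *
    hermiteH m (v / Real.sqrt T)

/-- Gram coefficient a_{m,n} = ∫ ψ_m ψ_n. -/
noncomputable def gramA (T : ℝ) (m n : ℕ) : ℝ := ∫ v : ℝ, psi T m v * psi T n v

namespace GramAux

open Polynomial Topology

/-! ### Polynomial model of the Hermite functions -/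

noncomputable def Hp : ℕ → Polynomial ℝ
  | 0 => 1
  | 1 => 2 * X
  | (n + 2) => 2 * X * Hp (n + 1) - ((2 * (n + 1) : ℕ) : Polynomial ℝ) * Hp n

lemma hermiteH_eval : ∀ (n : ℕ) (x : ℝ), hermiteH n x = (Hp n).eval x := by
  intro n
  induction n using Nat.strong_induction_on with
  | _ n ih =>
    match n with
    | 0 => intro x; simp [hermiteH, Hp]
    | 1 => intro x; simp [hermiteH, Hp]
    | (n+2) =>
      intro x
      rw [hermiteH, Hp]
      rw [ih (n+1) (by omega), ih n (by omega)]
      simp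

lemma Hp_deriv : ∀ n : ℕ, derivative (Hp (n+1)) = ((2 * (n+1) : ℕ) : Polynomial ℝ) * Hp n := by
  intro n
  induction n using Nat.strong_induction_on with
  | _ n ih =>
    match n with
    | 0 =>
      show derivative (Hp 1) = _
      rw [show Hp 1 = 2 * X from rfl, show Hp 0 = 1 from rfl]
      simp
    | 1 =>
      show derivative (Hp 2) = _
      rw [show Hp 2 = 2 * X * Hp 1 - ((2 * (0 + 1) : ℕ) : Polynomial ℝ) * Hp 0 from rfl,
        show Hp 1 = 2 * X from rfl, show Hp 0 = 1 from rfl]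
      simp
      ring
    | (n+2) =>
      show derivative (Hp (n+3)) = _
      rw [show Hp (n+3) = 2 * X * Hp (n + 2) - ((2 * (n + 1 + 1) : ℕ) : Polynomial ℝ) * Hp (n+1) from rfl]
      simp only [derivative_sub, derivative_mul, derivative_X, derivative_natCast,
        derivative_ofNat, ih (n+1) (by omega), ih n (by omega)]
      rw [show Hp (n+2) = 2 * X * Hp (n + 1) - ((2 * (n + 1) : ℕ) : Polynomial ℝ) * Hp n from rfl]
      push_cast
      ring

lemma Hp_deriv_all (n : ℕ) : derivative (Hp n) = ((2 * n : ℕ) : Polynomial ℝ) * Hp (n - 1) := by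
  match n with
  | 0 => simp [Hp]
  | (n+1) => exact Hp_deriv n

lemma Hp_succ (b : ℕ) : Hp (b + 1) = 2 * X * Hp b - ((2 * b : ℕ) : Polynomial ℝ) * Hp (b - 1) := by
  match b with
  | 0 => simp [Hp]
  | (b+1) => rfl

/-! ### Integrability of gaussian times polynomial -/

lemma pow_exp_le (n : ℕ) (x : ℝ) :
    |x| ^ n * Real.exp (-2 * x ^ 2) ≤ Real.exp ((n : ℝ) ^ 2 / 4) * Real.exp (-1 * x ^ 2) := by
  have h1 : |x| ^ n ≤ Real.exp ((n : ℝ) * |x|) := by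
    calc |x| ^ n ≤ Real.exp |x| ^ n :=
          pow_le_pow_left₀ (abs_nonneg x) (by linarith [Real.add_one_le_exp |x|]) n
      _ = Real.exp ((n : ℝ) * |x|) := by rw [← Real.exp_nat_mul]
  calc |x| ^ n * Real.exp (-2 * x ^ 2)
      ≤ Real.exp ((n : ℝ) * |x|) * Real.exp (-2 * x ^ 2) := by
        apply mul_le_mul_of_nonneg_right h1 (Real.exp_pos _).le
    _ = Real.exp ((n : ℝ) * |x| - 2 * x ^ 2) := by rw [← Real.exp_add]; ring_nf
    _ ≤ Real.exp ((n : ℝ) ^ 2 / 4 - x ^ 2) := by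
        apply Real.exp_le_exp.2
        nlinarith [sq_nonneg (|x| - (n : ℝ) / 2), sq_abs x]
    _ = Real.exp ((n : ℝ) ^ 2 / 4) * Real.exp (-1 * x ^ 2) := by
        rw [← Real.exp_add]; ring_nf

lemma integrable_mono_pow (n : ℕ) : Integrable (fun x : ℝ => x ^ n * Real.exp (-2 * x ^ 2)) := by
  apply Integrable.mono' ((integrable_exp_neg_mul_sq one_pos).const_mul
    (Real.exp ((n : ℝ) ^ 2 / 4))) ?_ ?_
  · exact ((continuous_pow n).mul (by continuity)).aestronglyMeasurable
  · filter_upwards with x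
    rw [norm_mul, Real.norm_eq_abs, Real.norm_eq_abs, abs_pow, Real.abs_exp]
    exact pow_exp_le n x

lemma integrable_gaussian_poly (P : Polynomial ℝ) :
    Integrable (fun x : ℝ => Real.exp (-2 * x ^ 2) * P.eval x) := by
  have : (fun x : ℝ => Real.exp (-2 * x ^ 2) * P.eval x)
      = fun x => ∑ i ∈ Finset.range (P.natDegree + 1),
          P.coeff i * (x ^ i * Real.exp (-2 * x ^ 2)) := by
    ext x
    rw [Polynomial.eval_eq_sum_range, Finset.mul_sum]
    congr 1; ext i; ring
  rw [this]
  exact integrable_finset_sum _ (fun i _ => (integrable_mono_pow i).const_mul _)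

/-! ### The gaussian integral functional -/

noncomputable def GI (P : Polynomial ℝ) : ℝ := ∫ x : ℝ, Real.exp (-2 * x ^ 2) * P.eval x

lemma GI_sub (P Q : Polynomial ℝ) : GI (P - Q) = GI P - GI Q := by
  unfold GI
  rw [← integral_sub (integrable_gaussian_poly P) (integrable_gaussian_poly Q)]
  congr 1; funext x; simp; ring

lemma GI_add (P Q : Polynomial ℝ) : GI (P + Q) = GI P + GI Q := by
  unfold GI
  rw [← integral_add (integrable_gaussian_poly P) (integrable_gaussian_poly Q)]
  congr 1; funext x; simp; ring

lemma GI_const_mul (c : ℝ) (P : Polynomial ℝ) : GI (C c * P) = c * GI P := by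
  unfold GI
  rw [← MeasureTheory.integral_const_mul]
  congr 1; funext x; simp; ring

lemma GI_natCast_mul (n : ℕ) (P : Polynomial ℝ) : GI ((n : Polynomial ℝ) * P) = n * GI P := by
  rw [← map_natCast (C : ℝ →+* Polynomial ℝ) n, GI_const_mul]

lemma GI_two_mul (P : Polynomial ℝ) : GI (2 * P) = 2 * GI P := by
  rw [show (2 : Polynomial ℝ) = C (2 : ℝ) from (map_ofNat (C : ℝ →+* Polynomial ℝ) 2).symm,
    GI_const_mul]

lemma GI_one : GI 1 = Real.sqrt (π / 2) := by
  unfold GI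
  simp only [eval_one, mul_one]
  exact integral_gaussian 2

lemma GI_parts (P : Polynomial ℝ) : GI (derivative P) = 4 * GI (X * P) := by
  have hderiv : ∀ x : ℝ, HasDerivAt (fun x : ℝ => Real.exp (-2 * x ^ 2) * P.eval x)
      (Real.exp (-2 * x ^ 2) * ((derivative P - C 4 * X * P).eval x)) x := by
    intro x
    have h1 : HasDerivAt (fun x : ℝ => -2 * x ^ 2) (-4 * x) x := by
      have := (hasDerivAt_pow 2 x).const_mul (-2 : ℝ)
      refine this.congr_deriv ?_
      ring
    have h2 := (h1.exp).mul (P.hasDerivAt x)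
    refine h2.congr_deriv ?_
    simp [Polynomial.eval_sub, Polynomial.eval_mul]
    ring
  have h0 : ∫ x : ℝ, Real.exp (-2 * x ^ 2) * ((derivative P - C 4 * X * P).eval x) = 0 :=
    integral_eq_zero_of_hasDerivAt_of_integrable hderiv
      (integrable_gaussian_poly _) (integrable_gaussian_poly _)
  have h3 : GI (derivative P - C 4 * X * P) = 0 := h0
  rw [GI_sub, show C (4:ℝ) * X * P = C 4 * (X * P) from by ring, GI_const_mul] at h3
  linarith

/-! ### The basic integrals -/

noncomputable def I2 (a b : ℕ) : ℝ := GI (Hp a * Hp b)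

lemma I2_symm (a b : ℕ) : I2 a b = I2 b a := by
  unfold I2; rw [mul_comm]

lemma I2_rec (a b : ℕ) : I2 a (b + 1) = a * I2 (a - 1) b - b * I2 a (b - 1) := by
  unfold I2
  rw [Hp_succ b]
  have hsplit : Hp a * (2 * X * Hp b - ((2 * b : ℕ) : Polynomial ℝ) * Hp (b - 1)) =
      2 * (X * (Hp a * Hp b)) - ((2 * b : ℕ) : Polynomial ℝ) * (Hp a * Hp (b - 1)) := by
    ring
  rw [hsplit, GI_sub, GI_two_mul, GI_natCast_mul]
  have hparts := GI_parts (Hp a * Hp b)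
  have hd : derivative (Hp a * Hp b) =
      ((2 * a : ℕ) : Polynomial ℝ) * (Hp (a - 1) * Hp b)
        + ((2 * b : ℕ) : Polynomial ℝ) * (Hp a * Hp (b - 1)) := by
    rw [derivative_mul, Hp_deriv_all a, Hp_deriv_all b]
    ring
  rw [hd, GI_add, GI_natCast_mul, GI_natCast_mul] at hparts
  push_cast
  push_cast at hparts
  nlinarith [hparts]

/-! ### Closed formula -/

noncomputable def Jm (a b : ℕ) : ℝ :=
  if Even (a + b) then
    (-1 : ℝ) ^ ((a + b) / 2 + a) * Real.sqrt (π / 2) * (Nat.factorial (a + b) : ℝ) /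
      ((Nat.factorial ((a + b) / 2) : ℝ) * 2 ^ ((a + b) / 2))
  else 0

lemma Jm_symm (a b : ℕ) : Jm a b = Jm b a := by
  unfold Jm
  rcases Nat.even_or_odd (a + b) with h | h
  · rw [if_pos h, if_pos (by rwa [Nat.add_comm] : Even (b + a))]
    obtain ⟨t, ht⟩ := h
    have hsign : (-1 : ℝ) ^ ((a + b) / 2 + a) = (-1) ^ ((b + a) / 2 + b) := by
      have h1 : ((-1 : ℝ)) ^ ((a + b) / 2 + a) * (-1) ^ ((b + a) / 2 + b) = 1 := by
        rw [← pow_add]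
        exact Even.neg_one_pow ⟨(a + b) / 2 + t, by omega⟩
      have h2 : ((-1 : ℝ)) ^ ((b + a) / 2 + b) * (-1) ^ ((b + a) / 2 + b) = 1 := by
        rw [← pow_add]
        exact Even.neg_one_pow ⟨(b + a) / 2 + b, by omega⟩
      calc (-1 : ℝ) ^ ((a + b) / 2 + a)
          = (-1 : ℝ) ^ ((a + b) / 2 + a) * ((-1) ^ ((b + a) / 2 + b) * (-1) ^ ((b + a) / 2 + b)) := by
            rw [h2, mul_one]
        _ = (-1) ^ ((b + a) / 2 + b) := by rw [← mul_assoc, h1, one_mul]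
    rw [hsign, Nat.add_comm a b]
  · rw [if_neg (by simpa [Nat.not_even_iff_odd] using h),
      if_neg (by simpa [Nat.not_even_iff_odd, Nat.add_comm b a] using h)]

lemma factF (k : ℕ) : ((2 * k + 2).factorial : ℝ) = (2 * k + 2) * ((2 * k + 1) * (2 * k).factorial) := by
  rw [show (2*k+2).factorial = (2*k+2) * ((2*k+1) * (2*k).factorial) from by
    rw [Nat.factorial_succ, Nat.factorial_succ]]
  push_cast; ring

lemma factD (k : ℕ) : (((k + 1).factorial : ℝ)) = (k + 1) * k.factorial := by
  rw [Nat.factorial_succ]; push_cast; ring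

lemma Jrec (a b : ℕ) : Jm a (b + 1) = a * Jm (a - 1) b - b * Jm a (b - 1) := by
  rcases Nat.even_or_odd (a + b) with h | h
  · have h1 : Jm a (b + 1) = 0 := by
      unfold Jm
      rw [if_neg]
      intro hc
      obtain ⟨t, ht⟩ := h; obtain ⟨s, hs⟩ := hc; omega
    rw [h1]
    have h2 : (a : ℝ) * Jm (a - 1) b = 0 := by
      rcases Nat.eq_zero_or_pos a with ha | ha
      · simp [ha]
      · have : Jm (a - 1) b = 0 := by
          unfold Jm
          rw [if_neg]
          intro hc
          obtain ⟨t, ht⟩ := h; obtain ⟨s, hs⟩ := hc; omega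
        rw [this, mul_zero]
    have h3 : (b : ℝ) * Jm a (b - 1) = 0 := by
      rcases Nat.eq_zero_or_pos b with hb | hb
      · simp [hb]
      · have : Jm a (b - 1) = 0 := by
          unfold Jm
          rw [if_neg]
          intro hc
          obtain ⟨t, ht⟩ := h; obtain ⟨s, hs⟩ := hc; omega
        rw [this, mul_zero]
    rw [h2, h3]; ring
  · obtain ⟨k, hk⟩ := h
    have hkfne : (k.factorial : ℝ) ≠ 0 := Nat.cast_ne_zero.2 k.factorial_ne_zero
    rcases Nat.eq_zero_or_pos a with ha | ha
    · subst ha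
      simp only [Nat.cast_zero, zero_mul, zero_sub]
      have hb : b = 2 * k + 1 := by omega
      subst hb
      have e1 : Jm 0 (2 * k + 1 + 1) =
          (-1 : ℝ) ^ (k + 1 + 0) * Real.sqrt (π / 2) * ((2 * k + 2).factorial : ℝ) /
            ((k + 1).factorial * 2 ^ (k + 1)) := by
        unfold Jm
        rw [show 0 + (2 * k + 1 + 1) = 2 * k + 2 from by omega, if_pos ⟨k + 1, by omega⟩,
          show (2 * k + 2) / 2 = k + 1 from by omega]
      have e2 : Jm 0 (2 * k + 1 - 1) =
          (-1 : ℝ) ^ (k + 0) * Real.sqrt (π / 2) * ((2 * k).factorial : ℝ) /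
            (k.factorial * 2 ^ k) := by
        unfold Jm
        rw [show 0 + (2 * k + 1 - 1) = 2 * k from by omega, if_pos ⟨k, by omega⟩,
          show (2 * k) / 2 = k from by omega]
      rw [e1, e2, factF k, factD k]
      push_cast
      simp only [pow_add, pow_succ, pow_zero]
      field_simp
    · obtain ⟨a', rfl⟩ : ∃ a', a = a' + 1 := ⟨a - 1, by omega⟩
      rcases Nat.eq_zero_or_pos b with hb | hb
      · subst hb
        have ha' : a' = 2 * k := by omega
        subst ha'
        simp only [Nat.cast_zero, zero_mul, sub_zero, Nat.add_sub_cancel]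
        have e1 : Jm (2 * k + 1) 1 =
            (-1 : ℝ) ^ (k + 1 + (2 * k + 1)) * Real.sqrt (π / 2) * ((2 * k + 2).factorial : ℝ) /
              ((k + 1).factorial * 2 ^ (k + 1)) := by
          unfold Jm
          rw [show 2 * k + 1 + 1 = 2 * k + 2 from by omega, if_pos ⟨k + 1, by omega⟩,
            show (2 * k + 2) / 2 = k + 1 from by omega]
        have e2 : Jm (2 * k) 0 =
            (-1 : ℝ) ^ (k + 2 * k) * Real.sqrt (π / 2) * ((2 * k).factorial : ℝ) /
              (k.factorial * 2 ^ k) := by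
          unfold Jm
          rw [show 2 * k + 0 = 2 * k from by omega, if_pos ⟨k, by omega⟩,
            show (2 * k) / 2 = k from by omega]
        rw [e1, e2, factF k, factD k]
        push_cast
        simp only [pow_add, pow_succ, pow_mul, pow_zero, neg_one_sq, one_pow, pow_one]
        field_simp
      · have e1 : Jm (a' + 1) (b + 1) =
            (-1 : ℝ) ^ (k + 1 + (a' + 1)) * Real.sqrt (π / 2) * ((2 * k + 2).factorial : ℝ) /
              ((k + 1).factorial * 2 ^ (k + 1)) := by
          unfold Jm
          rw [show a' + 1 + (b + 1) = 2 * k + 2 from by omega, if_pos ⟨k + 1, by omega⟩,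
            show (2 * k + 2) / 2 = k + 1 from by omega]
        have e2 : Jm (a' + 1 - 1) b =
            (-1 : ℝ) ^ (k + a') * Real.sqrt (π / 2) * ((2 * k).factorial : ℝ) /
              (k.factorial * 2 ^ k) := by
          simp only [Nat.add_sub_cancel]
          unfold Jm
          rw [show a' + b = 2 * k from by omega, if_pos ⟨k, by omega⟩,
            show (2 * k) / 2 = k from by omega]
        have e3 : Jm (a' + 1) (b - 1) =
            (-1 : ℝ) ^ (k + (a' + 1)) * Real.sqrt (π / 2) * ((2 * k).factorial : ℝ) /
              (k.factorial * 2 ^ k) := by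
          unfold Jm
          rw [show a' + 1 + (b - 1) = 2 * k from by omega, if_pos ⟨k, by omega⟩,
            show (2 * k) / 2 = k from by omega]
        rw [e1, e2, e3, factF k, factD k]
        have hb' : (b : ℝ) = 2 * k - a' := by
          have h : a' + b = 2 * k := by omega
          have := congrArg (Nat.cast : ℕ → ℝ) h
          push_cast at this
          linarith
        rw [hb']
        push_cast
        simp only [pow_add, pow_succ, pow_zero, pow_one]
        field_simp
        ring

lemma I2_eq_Jm (a b : ℕ) : I2 a b = Jm a b := by
  suffices h : ∀ n a b, a + b = n → I2 a b = Jm a b from h (a + b) a b rfl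
  intro n
  induction n using Nat.strong_induction_on with
  | _ n ih =>
    intro a b hab
    match b with
    | 0 =>
      match a with
      | 0 =>
        have h1 : I2 0 0 = Real.sqrt (π / 2) := by
          unfold I2
          rw [show Hp 0 * Hp 0 = 1 from by rw [show Hp 0 = 1 from rfl]; ring, GI_one]
        have h2 : Jm 0 0 = Real.sqrt (π / 2) := by
          unfold Jm
          rw [if_pos (by simp)]
          simp [Nat.factorial]
        rw [h1, h2]
      | (a' + 1) =>
        rw [I2_symm, Jm_symm, I2_rec 0 a', Jrec 0 a']
        simp only [Nat.cast_zero, zero_mul, zero_sub, neg_inj]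
        rcases Nat.eq_zero_or_pos a' with ha' | ha'
        · simp [ha']
        · rw [ih (0 + (a' - 1)) (by omega) 0 (a' - 1) rfl]
    | (b' + 1) =>
      rw [I2_rec a b', Jrec a b',
        ih ((a - 1) + b') (by omega) (a - 1) b' rfl,
        ih (a + (b' - 1)) (by omega) a (b' - 1) rfl]

end GramAux

theorem gramA_closed_formula (T : ℝ) (hT : 0 < T) (m l : ℕ) (hl : l ≤ m) :
    gramA T (m - l) (m + l) =
      (-1 : ℝ) ^ l * T ^ (-(1 : ℝ) / 2) * (2 : ℝ) ^ (-(2 * (m : ℝ)) - 1 / 2) *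
        (Nat.factorial (2 * m) : ℝ) /
        ((Nat.factorial m : ℝ) *
          Real.sqrt ((Nat.factorial (m - l) : ℝ) * (Nat.factorial (m + l) : ℝ))) := by
  have hst : (0 : ℝ) < Real.sqrt T := Real.sqrt_pos.2 hT
  set a := m - l with ha
  set b := m + l with hb
  have hab : a + b = 2 * m := by omega
  have hrp : ∀ c : ℝ, 0 < c → c ^ (-(1 : ℝ) / 2) = (Real.sqrt c)⁻¹ := by
    intro c hc
    rw [show (-(1 : ℝ) / 2) = -(1 / 2) from by norm_num, Real.rpow_neg hc.le,
      ← Real.sqrt_eq_rpow]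
  have hfa : (0 : ℝ) < (Nat.factorial a : ℝ) := by exact_mod_cast a.factorial_pos
  have hfb : (0 : ℝ) < (Nat.factorial b : ℝ) := by exact_mod_cast b.factorial_pos
  have hfm : (0 : ℝ) < (Nat.factorial m : ℝ) := by exact_mod_cast m.factorial_pos
  have hsp : (0 : ℝ) < Real.sqrt π := Real.sqrt_pos.2 Real.pi_pos
  -- change of variables
  have hcv := MeasureTheory.Measure.integral_comp_mul_left
    (fun v => psi T a v * psi T b v) (Real.sqrt T)
  rw [abs_inv, abs_of_pos hst, smul_eq_mul] at hcv
  have hint : gramA T a b = Real.sqrt T * ∫ x : ℝ,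
      psi T a (Real.sqrt T * x) * psi T b (Real.sqrt T * x) := by
    unfold gramA
    rw [hcv]
    field_simp
  -- integrand computation
  have hpsi : ∀ x : ℝ, psi T a (Real.sqrt T * x) * psi T b (Real.sqrt T * x)
      = (T ^ (-(1 : ℝ) / 2) * T ^ (-(1 : ℝ) / 2) *
          (((2 : ℝ) ^ a * (Nat.factorial a : ℝ) * Real.sqrt π) ^ (-(1 : ℝ) / 2) *
           ((2 : ℝ) ^ b * (Nat.factorial b : ℝ) * Real.sqrt π) ^ (-(1 : ℝ) / 2))) *
        (Real.exp (-2 * x ^ 2) * ((GramAux.Hp a * GramAux.Hp b).eval x)) := by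
    intro x
    unfold psi
    rw [GramAux.hermiteH_eval, GramAux.hermiteH_eval]
    have h1 : -(Real.sqrt T * x) ^ 2 / T = -x ^ 2 := by
      rw [mul_pow, Real.sq_sqrt hT.le]
      field_simp
    have h2 : Real.sqrt T * x / Real.sqrt T = x := by
      field_simp
    have hexp : Real.exp (-x ^ 2) * Real.exp (-x ^ 2) = Real.exp (-2 * x ^ 2) := by
      rw [← Real.exp_add]; congr 1; ring
    rw [h1, h2, Polynomial.eval_mul, ← hexp]
    ring
  have hint2 : gramA T a b = Real.sqrt T *
      ((T ^ (-(1 : ℝ) / 2) * T ^ (-(1 : ℝ) / 2) *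
          (((2 : ℝ) ^ a * (Nat.factorial a : ℝ) * Real.sqrt π) ^ (-(1 : ℝ) / 2) *
           ((2 : ℝ) ^ b * (Nat.factorial b : ℝ) * Real.sqrt π) ^ (-(1 : ℝ) / 2))) *
        GramAux.I2 a b) := by
    rw [hint]
    congr 1
    rw [show (∫ x : ℝ, psi T a (Real.sqrt T * x) * psi T b (Real.sqrt T * x))
        = ∫ x : ℝ, (T ^ (-(1 : ℝ) / 2) * T ^ (-(1 : ℝ) / 2) *
            (((2 : ℝ) ^ a * (Nat.factorial a : ℝ) * Real.sqrt π) ^ (-(1 : ℝ) / 2) *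
             ((2 : ℝ) ^ b * (Nat.factorial b : ℝ) * Real.sqrt π) ^ (-(1 : ℝ) / 2))) *
          (Real.exp (-2 * x ^ 2) * ((GramAux.Hp a * GramAux.Hp b).eval x)) from by
        congr 1; funext x; exact hpsi x]
    rw [MeasureTheory.integral_const_mul]
    rfl
  -- evaluate Jm
  have hJ : GramAux.Jm a b = (-1 : ℝ) ^ l *
      (Real.sqrt (π / 2) * (Nat.factorial (2 * m) : ℝ) /
        ((Nat.factorial m : ℝ) * 2 ^ m)) := by
    unfold GramAux.Jm
    rw [show a + b = 2 * m from hab, if_pos ⟨m, by omega⟩,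
      show 2 * m / 2 = m from by omega]
    have hsign : (-1 : ℝ) ^ (m + a) = (-1 : ℝ) ^ l := by
      have h1 : ((-1 : ℝ)) ^ (m + a) * (-1 : ℝ) ^ l = 1 := by
        rw [← pow_add]; exact Even.neg_one_pow ⟨m, by omega⟩
      have h2 : ((-1 : ℝ)) ^ l * (-1 : ℝ) ^ l = 1 := by
        rw [← pow_add]; exact Even.neg_one_pow ⟨l, by omega⟩
      calc (-1 : ℝ) ^ (m + a) = (-1 : ℝ) ^ (m + a) * ((-1 : ℝ) ^ l * (-1 : ℝ) ^ l) := by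
            rw [h2, mul_one]
        _ = (-1 : ℝ) ^ l := by rw [← mul_assoc, h1, one_mul]
    rw [hsign]
    ring
  -- sqrt product identity
  have hprod : Real.sqrt ((2 : ℝ) ^ a * (Nat.factorial a : ℝ) * Real.sqrt π) *
      Real.sqrt ((2 : ℝ) ^ b * (Nat.factorial b : ℝ) * Real.sqrt π)
      = 2 ^ m * (Real.sqrt ((Nat.factorial a : ℝ) * (Nat.factorial b : ℝ)) * Real.sqrt π) := by
    rw [← Real.sqrt_mul (by positivity)]
    have hz : ((2 : ℝ) ^ a * (Nat.factorial a : ℝ) * Real.sqrt π) *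
        ((2 : ℝ) ^ b * (Nat.factorial b : ℝ) * Real.sqrt π)
        = ((2 : ℝ) ^ m) ^ 2 * (((Nat.factorial a : ℝ) * (Nat.factorial b : ℝ)) * π) := by
      have h2 : (2 : ℝ) ^ a * (2 : ℝ) ^ b = ((2 : ℝ) ^ m) ^ 2 := by
        rw [← pow_add, ← pow_mul]
        congr 1
        omega
      have hpi : Real.sqrt π * Real.sqrt π = π := Real.mul_self_sqrt Real.pi_pos.le
      calc ((2 : ℝ) ^ a * (Nat.factorial a : ℝ) * Real.sqrt π) *
          ((2 : ℝ) ^ b * (Nat.factorial b : ℝ) * Real.sqrt π)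
          = ((2 : ℝ) ^ a * (2 : ℝ) ^ b) *
            (((Nat.factorial a : ℝ) * (Nat.factorial b : ℝ)) * (Real.sqrt π * Real.sqrt π)) := by
            ring
        _ = _ := by rw [h2, hpi]
    rw [hz, Real.sqrt_mul (by positivity), Real.sqrt_sq (by positivity),
      Real.sqrt_mul (by positivity)]
  -- 2-power rpow
  have h2rp : (2 : ℝ) ^ (-(2 * (m : ℝ)) - 1 / 2) = ((2 : ℝ) ^ (2 * m) * Real.sqrt 2)⁻¹ := by
    rw [show (-(2 * (m : ℝ)) - 1 / 2) = -(((2 * m : ℕ) : ℝ) + (1 / 2 : ℝ)) from by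
        push_cast; ring,
      Real.rpow_neg (by norm_num : (0:ℝ) ≤ 2),
      Real.rpow_add (by norm_num : (0:ℝ) < 2), Real.rpow_natCast, ← Real.sqrt_eq_rpow]
  have hs2 : Real.sqrt 2 * Real.sqrt 2 = 2 := Real.mul_self_sqrt (by norm_num)
  have hs2pos : (0 : ℝ) < Real.sqrt 2 := Real.sqrt_pos.2 (by norm_num)
  have hfabpos : (0 : ℝ) < Real.sqrt ((Nat.factorial a : ℝ) * (Nat.factorial b : ℝ)) := by
    positivity
  -- final computation
  rw [hint2, GramAux.I2_eq_Jm, hJ, hrp T hT, hrp _ (by positivity), hrp _ (by positivity),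
    h2rp, Real.sqrt_div Real.pi_pos.le, ← mul_inv, ← mul_inv, hprod]
  field_simp
  ring_nf
end

section
/- For every natural number k, the Gram coefficient of the zeroth asymmetric Hermite function against an even-indexed one satisfies a_{0, 2k} = (−1)^k · T^{−1/2} · 2^{−2k − 1/2} · √((2k)!) / k!. -/
open Real MeasureTheory Matrix Filter

open Polynomial Topology

noncomputable def HP : ℕ → Polynomial ℝ
  | 0 => 1
  | 1 => Polynomial.C 2 * Polynomial.X
  | (n + 2) => Polynomial.C 2 * Polynomial.X * HP (n + 1) - Polynomial.C (2 * (n + 1) : ℝ) * HP n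

lemma hermiteH_eval : ∀ n x, hermiteH n x = (HP n).eval x
  | 0, x => by simp [hermiteH, HP]
  | 1, x => by simp [hermiteH, HP]
  | (n + 2), x => by
      show 2 * x * hermiteH (n + 1) x - 2 * (n + 1) * hermiteH n x = _
      rw [hermiteH_eval (n + 1) x, hermiteH_eval n x]
      simp [HP]

noncomputable def dH : ℕ → ℝ → ℝ
  | 0, _ => 0
  | (n + 1), x => 2 * ((n : ℝ) + 1) * hermiteH n x

lemma hasDerivAt_hermiteH : ∀ n x, HasDerivAt (fun y => hermiteH n y) (dH n x) x
  | 0, x => by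
      have : (fun y => hermiteH 0 y) = fun _ : ℝ => (1 : ℝ) := rfl
      rw [this, show dH 0 x = 0 from rfl]
      exact hasDerivAt_const x 1
  | 1, x => by
      have : (fun y => hermiteH 1 y) = fun y : ℝ => 2 * y := rfl
      rw [this]
      have h : HasDerivAt (fun y : ℝ => 2 * y) 2 x := by
        simpa using (hasDerivAt_id x).const_mul (2 : ℝ)
      convert h using 1
      simp [dH, hermiteH]
  | (n + 2), x => by
      have ih1 := hasDerivAt_hermiteH (n + 1) x
      have ih0 := hasDerivAt_hermiteH n x
      have e : (fun y => hermiteH (n + 2) y) =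
          fun y => 2 * y * hermiteH (n + 1) y - 2 * ((n : ℝ) + 1) * hermiteH n y := rfl
      rw [e]
      have h2y : HasDerivAt (fun y : ℝ => 2 * y) 2 x := by
        simpa using (hasDerivAt_id x).const_mul (2 : ℝ)
      have h := (h2y.mul ih1).sub (ih0.const_mul (2 * ((n : ℝ) + 1)))
      refine h.congr_deriv ?_
      rcases n with _ | m
      · simp [dH, hermiteH]; ring
      · simp only [dH]
        rw [show hermiteH (m + 2) x
            = 2 * x * hermiteH (m + 1) x - 2 * ((m : ℝ) + 1) * hermiteH m x from rfl]
        push_cast; ring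

lemma integrable_pow_gauss (n : ℕ) :
    Integrable (fun x : ℝ => x ^ n * Real.exp (-2 * x ^ 2)) := by
  have hg : Integrable (fun x : ℝ => ((n.factorial : ℝ) * Real.exp 4⁻¹) * Real.exp (-1 * x ^ 2)) :=
    (integrable_exp_neg_mul_sq one_pos).const_mul _
  refine hg.mono' ?_ (ae_of_all _ fun x => ?_)
  · exact ((continuous_pow n).mul
      (Real.continuous_exp.comp (continuous_const.mul (continuous_pow 2)))).aestronglyMeasurable
  · have h1 : |x| ^ n ≤ (n.factorial : ℝ) * Real.exp |x| := by
      have hs := Real.sum_le_exp_of_nonneg (abs_nonneg x) (n + 1)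
      have hone : |x| ^ n / (n.factorial : ℝ) ≤ ∑ i ∈ Finset.range (n + 1), |x| ^ i / i.factorial :=
        Finset.single_le_sum (f := fun i => |x| ^ i / (i.factorial : ℝ))
          (fun i _ => by positivity) (Finset.self_mem_range_succ n)
      have hfac : (0 : ℝ) < (n.factorial : ℝ) := by positivity
      rw [div_le_iff₀ hfac] at hone
      calc |x| ^ n ≤ (∑ i ∈ Finset.range (n + 1), |x| ^ i / i.factorial) * n.factorial := hone
        _ ≤ Real.exp |x| * n.factorial := by
            apply mul_le_mul_of_nonneg_right hs hfac.le
        _ = (n.factorial : ℝ) * Real.exp |x| := by ring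
    have h2 : Real.exp |x| * Real.exp (-2 * x ^ 2) ≤ Real.exp 4⁻¹ * Real.exp (-1 * x ^ 2) := by
      rw [← Real.exp_add, ← Real.exp_add]
      apply Real.exp_le_exp.2
      nlinarith [sq_nonneg (2 * |x| - 1), sq_abs x]
    have hxe : (0 : ℝ) ≤ Real.exp (-2 * x ^ 2) := (Real.exp_pos _).le
    calc ‖x ^ n * Real.exp (-2 * x ^ 2)‖ = |x| ^ n * Real.exp (-2 * x ^ 2) := by
          rw [norm_mul, Real.norm_eq_abs, Real.norm_eq_abs, abs_pow,
            abs_of_pos (Real.exp_pos _)]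
      _ ≤ ((n.factorial : ℝ) * Real.exp |x|) * Real.exp (-2 * x ^ 2) :=
          mul_le_mul_of_nonneg_right h1 hxe
      _ = (n.factorial : ℝ) * (Real.exp |x| * Real.exp (-2 * x ^ 2)) := by ring
      _ ≤ (n.factorial : ℝ) * (Real.exp 4⁻¹ * Real.exp (-1 * x ^ 2)) := by
          apply mul_le_mul_of_nonneg_left h2 (by positivity)
      _ = ((n.factorial : ℝ) * Real.exp 4⁻¹) * Real.exp (-1 * x ^ 2) := by ring

lemma integrable_gauss_poly (p : Polynomial ℝ) :
    Integrable (fun x : ℝ => Real.exp (-2 * x ^ 2) * p.eval x) := by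
  induction p using Polynomial.induction_on' with
  | add p q hp hq => simpa [mul_add, Pi.add_def] using hp.add hq
  | monomial m c =>
      have h := (integrable_pow_gauss m).const_mul c
      refine h.congr (ae_of_all _ fun x => ?_)
      simp [eval_monomial]; ring

lemma tendsto_gauss_poly_top (p : Polynomial ℝ) :
    Tendsto (fun x : ℝ => Real.exp (-2 * x ^ 2) * p.eval x) atTop (𝓝 0) := by
  refine squeeze_zero_norm' (a := fun x => |p.eval x / Real.exp x|) ?_ ?_
  · filter_upwards [eventually_ge_atTop (1 : ℝ)] with x hx
    have he : Real.exp (-2 * x ^ 2) ≤ Real.exp (-x) := Real.exp_le_exp.2 (by nlinarith)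
    calc ‖Real.exp (-2 * x ^ 2) * p.eval x‖ = Real.exp (-2 * x ^ 2) * |p.eval x| := by
          rw [norm_mul, Real.norm_eq_abs, Real.norm_eq_abs, abs_of_pos (Real.exp_pos _)]
      _ ≤ Real.exp (-x) * |p.eval x| :=
          mul_le_mul_of_nonneg_right he (abs_nonneg _)
      _ = |p.eval x / Real.exp x| := by
          rw [abs_div, abs_of_pos (Real.exp_pos x), div_eq_mul_inv, ← Real.exp_neg]; ring
  · simpa using (p.tendsto_div_exp_atTop).abs

lemma tendsto_gauss_poly_bot (p : Polynomial ℝ) :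
    Tendsto (fun x : ℝ => Real.exp (-2 * x ^ 2) * p.eval x) atBot (𝓝 0) := by
  have h := (tendsto_gauss_poly_top (p.comp (-Polynomial.X))).comp tendsto_neg_atBot_atTop
  refine h.congr fun x => ?_
  simp [Function.comp, eval_comp, neg_sq]

lemma integral_gauss_deriv_zero (f f' : ℝ → ℝ)
    (hderiv : ∀ x, HasDerivAt f (f' x) x) (hint : Integrable f')
    (htop : Tendsto f atTop (𝓝 0)) (hbot : Tendsto f atBot (𝓝 0)) :
    ∫ x : ℝ, f' x = 0 := by
  have h1 : ∫ x in Set.Iic (0 : ℝ), f' x = f 0 - 0 :=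
    integral_Iic_of_hasDerivAt_of_tendsto' (fun x _ => hderiv x) hint.integrableOn hbot
  have h2 : ∫ x in Set.Ioi (0 : ℝ), f' x = 0 - f 0 :=
    integral_Ioi_of_hasDerivAt_of_tendsto' (fun x _ => hderiv x) hint.integrableOn htop
  rw [← intervalIntegral.integral_Iic_add_Ioi (b := (0 : ℝ)) hint.integrableOn hint.integrableOn, h1, h2]
  ring

lemma herm_gauss_integrable (m : ℕ) :
    Integrable (fun x : ℝ => Real.exp (-2 * x ^ 2) * hermiteH m x) := by
  have h := integrable_gauss_poly (HP m)
  refine h.congr (ae_of_all _ fun x => ?_)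
  simp only [← hermiteH_eval]

lemma herm_rec_step (n : ℕ) :
    ∫ x : ℝ, Real.exp (-2 * x ^ 2) * hermiteH (n + 2) x
      = -((n : ℝ) + 1) * ∫ x : ℝ, Real.exp (-2 * x ^ 2) * hermiteH n x := by
  have hderiv : ∀ x : ℝ, HasDerivAt (fun y => Real.exp (-2 * y ^ 2) * hermiteH (n + 1) y)
      ((-2 : ℝ) * (Real.exp (-2 * x ^ 2) * hermiteH (n + 2) x)
        + (-(2 * ((n : ℝ) + 1))) * (Real.exp (-2 * x ^ 2) * hermiteH n x)) x := by
    intro x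
    have h1 : HasDerivAt (fun y : ℝ => -2 * y ^ 2) (-(4 * x)) x := by
      have := (hasDerivAt_pow 2 x).const_mul (-2 : ℝ)
      refine this.congr_deriv ?_
      simp; ring
    have hg : HasDerivAt (fun y : ℝ => Real.exp (-2 * y ^ 2))
        (Real.exp (-2 * x ^ 2) * (-(4 * x))) x := by
      simpa [mul_comm] using h1.exp
    have h := hg.mul (hasDerivAt_hermiteH (n + 1) x)
    refine h.congr_deriv ?_
    rw [show dH (n + 1) x = 2 * ((n : ℝ) + 1) * hermiteH n x from rfl]
    rw [show hermiteH (n + 2) x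
        = 2 * x * hermiteH (n + 1) x - 2 * ((n : ℝ) + 1) * hermiteH n x from rfl]
    ring
  have hint : Integrable (fun x : ℝ =>
      (-2 : ℝ) * (Real.exp (-2 * x ^ 2) * hermiteH (n + 2) x)
        + (-(2 * ((n : ℝ) + 1))) * (Real.exp (-2 * x ^ 2) * hermiteH n x)) :=
    ((herm_gauss_integrable (n + 2)).const_mul (-2)).add
      ((herm_gauss_integrable n).const_mul (-(2 * ((n : ℝ) + 1))))
  have htop : Tendsto (fun x => Real.exp (-2 * x ^ 2) * hermiteH (n + 1) x) atTop (𝓝 0) := by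
    refine (tendsto_gauss_poly_top (HP (n + 1))).congr fun x => ?_
    simp only [← hermiteH_eval]
  have hbot : Tendsto (fun x => Real.exp (-2 * x ^ 2) * hermiteH (n + 1) x) atBot (𝓝 0) := by
    refine (tendsto_gauss_poly_bot (HP (n + 1))).congr fun x => ?_
    simp only [← hermiteH_eval]
  have key := integral_gauss_deriv_zero _ _ hderiv hint htop hbot
  rw [integral_add ((herm_gauss_integrable (n + 2)).const_mul _)
      ((herm_gauss_integrable n).const_mul _), integral_const_mul, integral_const_mul] at key
  linarith

lemma herm_gauss_even (k : ℕ) :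
    ∫ x : ℝ, Real.exp (-2 * x ^ 2) * hermiteH (2 * k) x
      = (-1 : ℝ) ^ k * ((2 * k).factorial : ℝ) / (2 ^ k * (k.factorial : ℝ))
          * Real.sqrt (π / 2) := by
  induction k with
  | zero =>
      simpa [hermiteH] using integral_gaussian 2
  | succ k ih =>
      have h := herm_rec_step (2 * k)
      have hidx : 2 * (k + 1) = 2 * k + 2 := by ring
      rw [hidx, h, ih]
      have e : (((2 * k + 2).factorial : ℕ) : ℝ)
          = (2 * (k : ℝ) + 2) * (2 * (k : ℝ) + 1) * ((2 * k).factorial : ℝ) := by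
        rw [show 2 * k + 2 = (2 * k + 1) + 1 by ring, Nat.factorial_succ, Nat.factorial_succ]
        push_cast; ring
      rw [e, Nat.factorial_succ]
      have hk : ((k.factorial : ℝ)) ≠ 0 := Nat.cast_ne_zero.2 k.factorial_ne_zero
      have h2k : ((2 : ℝ)) ^ k ≠ 0 := by positivity
      push_cast
      field_simp
      ring

theorem gramA_zero_even (T : ℝ) (hT : 0 < T) (k : ℕ) :
    gramA T 0 (2 * k) =
      (-1 : ℝ) ^ k * T ^ (-(1 : ℝ) / 2) * (2 : ℝ) ^ (-(2 * (k : ℝ)) - 1 / 2) *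
        Real.sqrt (Nat.factorial (2 * k) : ℝ) / (Nat.factorial k : ℝ) := by
  have hsT : 0 < Real.sqrt T := Real.sqrt_pos.2 hT
  have hπ : (0 : ℝ) < π := pi_pos
  have hF : (0 : ℝ) < (((2 * k).factorial : ℕ) : ℝ) := by positivity
  set c1 : ℝ := T ^ (-(1 : ℝ) / 2) with hc1def
  set A : ℝ := (Real.sqrt π) ^ (-(1 : ℝ) / 2) with hAdef
  set B : ℝ := ((2 : ℝ) ^ (2 * k) * (((2 * k).factorial : ℕ) : ℝ) * Real.sqrt π) ^ (-(1 : ℝ) / 2)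
    with hBdef
  set g : ℝ → ℝ := fun u => Real.exp (-2 * u ^ 2) * hermiteH (2 * k) u with hg
  have hpt : ∀ v : ℝ, psi T 0 v * psi T (2 * k) v = (c1 * c1 * A * B) * g (v / Real.sqrt T) := by
    intro v
    have hexp : Real.exp (-v ^ 2 / T) * Real.exp (-v ^ 2 / T)
        = Real.exp (-2 * (v / Real.sqrt T) ^ 2) := by
      rw [← Real.exp_add]; congr 1
      rw [div_pow, Real.sq_sqrt hT.le]; ring
    simp only [psi, hg]
    rw [show hermiteH 0 (v / Real.sqrt T) = 1 from rfl]
    rw [show ((2 : ℝ) ^ (0 : ℕ) * ((Nat.factorial 0 : ℕ) : ℝ) * Real.sqrt π) = Real.sqrt π by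
      norm_num]
    rw [← hc1def, ← hAdef, ← hBdef, ← hexp]
    ring
  have hstep : gramA T 0 (2 * k) = (c1 * c1 * A * B) * ∫ v : ℝ, g (v / Real.sqrt T) := by
    rw [gramA]
    simp only [hpt]
    exact integral_const_mul _ _
  rw [hstep, Measure.integral_comp_div g (Real.sqrt T), smul_eq_mul,
    abs_of_pos hsT]
  rw [hg]
  rw [herm_gauss_even k]
  -- now pure algebra
  set f : ℝ := Real.sqrt (((2 * k).factorial : ℕ) : ℝ) with hfdef
  set q : ℝ := Real.sqrt (Real.sqrt π) with hqdef
  have hq2 : q * q = Real.sqrt π := Real.mul_self_sqrt (Real.sqrt_nonneg π)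
  have hf2 : f * f = (((2 * k).factorial : ℕ) : ℝ) := Real.mul_self_sqrt hF.le
  have hc1 : c1 = (Real.sqrt T)⁻¹ := by
    rw [hc1def, show (-(1 : ℝ) / 2) = -(1 / 2 : ℝ) by ring, Real.rpow_neg hT.le,
      ← Real.sqrt_eq_rpow]
  have hA : A = q⁻¹ := by
    rw [hAdef, hqdef, show (-(1 : ℝ) / 2) = -(1 / 2 : ℝ) by ring,
      Real.rpow_neg (Real.sqrt_nonneg π), ← Real.sqrt_eq_rpow]
  have hB : B = ((2 : ℝ) ^ k * f * q)⁻¹ := by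
    rw [hBdef, show (-(1 : ℝ) / 2) = -(1 / 2 : ℝ) by ring,
      Real.rpow_neg (by positivity), ← Real.sqrt_eq_rpow]
    congr 1
    rw [Real.sqrt_mul (by positivity), Real.sqrt_mul (by positivity), hfdef, hqdef]
    congr 2
    rw [show (2 : ℝ) ^ (2 * k) = ((2 : ℝ) ^ k) ^ 2 by rw [← pow_mul, mul_comm]]
    exact Real.sqrt_sq (by positivity)
  have h2r : (2 : ℝ) ^ (-(2 * (k : ℝ)) - 1 / 2) = ((2 : ℝ) ^ (2 * k) * Real.sqrt 2)⁻¹ := by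
    rw [show (-(2 * (k : ℝ)) - 1 / 2) = -(2 * (k : ℝ) + 1 / 2) by ring,
      Real.rpow_neg (by norm_num), Real.rpow_add (by norm_num : (0:ℝ) < 2)]
    congr 2
    · rw [show (2 * (k : ℝ)) = ((2 * k : ℕ) : ℝ) by push_cast; ring, Real.rpow_natCast]
    · rw [← Real.sqrt_eq_rpow]
  have hsqdiv : Real.sqrt (π / 2) = Real.sqrt π / Real.sqrt 2 := by
    rw [Real.sqrt_div hπ.le]
  have hs2 : Real.sqrt 2 * Real.sqrt 2 = 2 := Real.mul_self_sqrt (by norm_num)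
  have h22 : (2 : ℝ) ^ (2 * k) = 2 ^ k * 2 ^ k := by rw [two_mul, pow_add]
  rw [hc1, hA, hB, h2r, hsqdiv, h22]
  have hq0 : q ≠ 0 := by rw [hqdef]; positivity
  have hf0 : f ≠ 0 := by rw [hfdef]; positivity
  have hs0 : Real.sqrt T ≠ 0 := ne_of_gt hsT
  have h2k0 : (2 : ℝ) ^ k ≠ 0 := by positivity
  have hKf0 : ((k.factorial : ℕ) : ℝ) ≠ 0 := Nat.cast_ne_zero.2 k.factorial_ne_zero
  have hs20 : Real.sqrt 2 ≠ 0 := by positivity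
  rw [← hf2, ← hq2]
  field_simp
end

section
/- For every natural number m, the diagonal Gram coefficient satisfies a_{m,m} = T^{−1/2} · 2^{−2m − 1/2} · (2m)! / (m!)². -/
open Real MeasureTheory Matrix Filter

open Polynomial

noncomputable def P : ℕ → Polynomial ℝ
  | 0 => 1
  | 1 => C 2 * X
  | (n + 2) => C 2 * X * P (n + 1) - C (2 * ((n : ℝ) + 1)) * P n

lemma P_zero : P 0 = 1 := rfl
lemma P_one : P 1 = C 2 * X := rfl
lemma P_add_two (n : ℕ) : P (n + 2) = C 2 * X * P (n + 1) - C (2 * ((n : ℝ) + 1)) * P n := rfl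

lemma integrable_abs_pow_gauss (n : ℕ) :
    Integrable (fun x : ℝ => |x| ^ n * Real.exp (-2 * x ^ 2)) := by
  have h : Integrable (fun x : ℝ => x ^ (n : ℝ) * Real.exp (-2 * x ^ 2)) :=
    integrable_rpow_mul_exp_neg_mul_sq (by norm_num) (lt_of_lt_of_le neg_one_lt_zero (Nat.cast_nonneg n))
  have h2 : Integrable (fun x : ℝ => x ^ n * Real.exp (-2 * x ^ 2)) := by
    simpa [Real.rpow_natCast] using h
  have := h2.abs
  refine this.congr ?_
  filter_upwards with x
  rw [abs_mul, abs_pow, abs_of_pos (Real.exp_pos _)]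

lemma integrable_P (p : Polynomial ℝ) :
    Integrable (fun x : ℝ => p.eval x * Real.exp (-2 * x ^ 2)) := by
  have hg : Integrable (fun x : ℝ =>
      ∑ i ∈ Finset.range (p.natDegree + 1), |p.coeff i| * (|x| ^ i * Real.exp (-2 * x ^ 2))) := by
    apply integrable_finset_sum
    intro i _
    exact (integrable_abs_pow_gauss i).const_mul _
  refine hg.mono' ?_ ?_
  · exact ((p.continuous_aeval).mul (Real.continuous_exp.comp (by fun_prop))).aestronglyMeasurable
  · filter_upwards with x
    rw [Real.norm_eq_abs, abs_mul, abs_of_pos (Real.exp_pos _)]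
    rw [Polynomial.eval_eq_sum_range]
    calc |∑ i ∈ Finset.range (p.natDegree + 1), p.coeff i * x ^ i| * Real.exp (-2 * x ^ 2)
        ≤ (∑ i ∈ Finset.range (p.natDegree + 1), |p.coeff i| * |x| ^ i) * Real.exp (-2 * x ^ 2) := by
          gcongr
          refine (Finset.abs_sum_le_sum_abs _ _).trans ?_
          apply Finset.sum_le_sum
          intro i _
          rw [abs_mul, abs_pow]
      _ = _ := by rw [Finset.sum_mul]; exact Finset.sum_congr rfl fun i _ => by ring

noncomputable def J (p : Polynomial ℝ) : ℝ := ∫ x : ℝ, p.eval x * Real.exp (-2 * x ^ 2)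


noncomputable def Jg (p : Polynomial ℝ) : ℝ := ∫ x : ℝ, p.eval x * Real.exp (-2 * x ^ 2)

lemma Jg_one : Jg 1 = Real.sqrt (π / 2) := by
  rw [Jg]
  simpa using integral_gaussian 2

lemma Jg_sub (p q : Polynomial ℝ) : Jg (p - q) = Jg p - Jg q := by
  simp only [Jg, eval_sub, sub_mul]
  exact integral_sub (integrable_P p) (integrable_P q)

lemma Jg_add (p q : Polynomial ℝ) : Jg (p + q) = Jg p + Jg q := by
  simp only [Jg, eval_add, add_mul]
  exact integral_add (integrable_P p) (integrable_P q)

lemma Jg_Cmul (c : ℝ) (p : Polynomial ℝ) : Jg (C c * p) = c * Jg p := by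
  simp only [Jg, eval_mul, eval_C, mul_assoc]
  exact integral_const_mul c _

lemma Pderiv : ∀ n : ℕ, (P (n + 1)).derivative = C (2 * ((n : ℝ) + 1)) * P n := by
  intro n
  induction n using Nat.strong_induction_on with
  | _ n ih =>
    match n with
    | 0 =>
      rw [P_one, P_zero]
      simp only [derivative_mul, derivative_C, derivative_X]
      norm_num
    | 1 =>
      rw [P_add_two, P_one, P_zero]
      simp only [derivative_sub, derivative_mul, derivative_C, derivative_X, derivative_one]
      simp only [_root_.map_mul, _root_.map_add, _root_.map_one, map_ofNat, map_natCast]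
      push_cast
      ring
    | (n + 2) =>
      rw [P_add_two (n + 1)]
      simp only [derivative_sub, derivative_mul, derivative_C, derivative_X]
      rw [ih (n + 1) (by omega), ih n (by omega), P_add_two n]
      simp only [_root_.map_mul, _root_.map_add, _root_.map_one, map_ofNat, map_natCast]
      push_cast
      ring

lemma hermiteH_eq (m : ℕ) (x : ℝ) : hermiteH m x = (P m).eval x := by
  induction m using Nat.strong_induction_on with
  | _ m ih =>
    match m with
    | 0 => simp [hermiteH, P_zero]
    | 1 => simp [hermiteH, P_one]
    | (n + 2) =>
      rw [hermiteH, P_add_two, ih (n + 1) (by omega), ih n (by omega)]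
      simp only [eval_sub, eval_mul, eval_C, eval_X]

lemma Jg_deriv (p : Polynomial ℝ) : Jg (p.derivative - C 4 * X * p) = 0 := by
  have hder : ∀ x : ℝ, HasDerivAt (fun y : ℝ => p.eval y * Real.exp (-2 * y ^ 2))
      ((p.derivative - C 4 * X * p).eval x * Real.exp (-2 * x ^ 2)) x := by
    intro x
    have h1 : HasDerivAt (fun y : ℝ => p.eval y) (p.derivative.eval x) x := p.hasDerivAt x
    have h2 : HasDerivAt (fun y : ℝ => Real.exp (-2 * y ^ 2))
        (Real.exp (-2 * x ^ 2) * (-2 * (2 * x))) x := by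
      have := ((hasDerivAt_pow 2 x).const_mul (-2 : ℝ)).exp
      simpa using this
    have := h1.mul h2
    refine HasDerivAt.congr_deriv this ?_
    simp only [eval_sub, eval_mul, eval_C, eval_X, eval_ofNat]
    ring
  exact integral_eq_zero_of_hasDerivAt_of_integrable hder (integrable_P _) (integrable_P p)

lemma Jkey (m n : ℕ) :
    Jg (P (m + 2) * P (n + 1)) =
      ((n : ℝ) + 1) * Jg (P (m + 1) * P n) - ((m : ℝ) + 1) * Jg (P m * P (n + 1)) := by
  have hpoly : C (2 : ℝ) * (P (m + 2) * P (n + 1)) =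
      C (2 * ((n : ℝ) + 1)) * (P (m + 1) * P n) - (C (2 * ((m : ℝ) + 1)) * (P m * P (n + 1))
        + ((P (m + 1) * P (n + 1)).derivative - C 4 * X * (P (m + 1) * P (n + 1)))) := by
    rw [derivative_mul, Pderiv m, Pderiv n, P_add_two m]
    simp only [_root_.map_mul, _root_.map_add, _root_.map_one, map_ofNat, map_natCast]
    ring
  have h := congrArg Jg hpoly
  rw [Jg_Cmul, Jg_sub, Jg_add, Jg_Cmul, Jg_Cmul, Jg_deriv] at h
  linarith

noncomputable def dd : ℕ → ℝ
  | 0 => 1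
  | (m + 1) => (2 * (m : ℝ) + 1) * dd m

lemma Jg_X2 : Jg (C 4 * X ^ 2) = Real.sqrt (π / 2) := by
  have h := Jg_deriv X
  have hpoly : (X : Polynomial ℝ).derivative - C 4 * X * X = 1 - C 4 * X ^ 2 := by
    rw [derivative_X]; ring
  rw [hpoly, Jg_sub, Jg_one] at h
  linarith

lemma JAB (m : ℕ) :
    Jg (P (m + 1) * P (m + 1)) = Real.sqrt (π / 2) * dd (m + 1) ∧
      Jg (P m * P (m + 2)) = -(Real.sqrt (π / 2) * dd (m + 1)) := by
  induction m with
  | zero =>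
    constructor
    · have h1 : P 1 * P 1 = C (4 : ℝ) * X ^ 2 := by
        rw [P_one]
        simp only [map_ofNat]
        ring
      rw [h1, Jg_X2]
      simp [dd]
    · have h2 : P 0 * P 2 = C (4 : ℝ) * X ^ 2 - C 2 * 1 := by
        rw [P_zero, P_add_two, P_one, P_zero]
        simp only [_root_.map_mul, _root_.map_add, _root_.map_one, map_ofNat, map_natCast]
        push_cast
        ring
      rw [h2, Jg_sub, Jg_X2, Jg_Cmul, Jg_one]
      simp [dd]
      ring
  | succ m ih =>
    obtain ⟨hA, hB⟩ := ih
    have hd : dd (m + 2) = (2 * ((m : ℝ) + 1) + 1) * dd (m + 1) := by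
      show dd (m + 1 + 1) = _
      rw [dd]
      push_cast
      ring
    have hA2 : Jg (P (m + 2) * P (m + 2)) = Real.sqrt (π / 2) * dd (m + 2) := by
      have h := Jkey m (m + 1)
      have hB' : Jg (P m * P (m + 1 + 1)) = -(Real.sqrt (π / 2) * dd (m + 1)) := hB
      rw [hA, hB'] at h
      have h' : Jg (P (m + 2) * P (m + 2)) =
          ((m : ℝ) + 1 + 1) * (Real.sqrt (π / 2) * dd (m + 1))
            - ((m : ℝ) + 1) * -(Real.sqrt (π / 2) * dd (m + 1)) := by
        rw [show P (m + 2) * P (m + 2) = P (m + 2) * P (m + 1 + 1) from rfl, h]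
        push_cast
        ring
      rw [h', hd]
      ring
    refine ⟨hA2, ?_⟩
    have h2 := Jkey (m + 1) m
    rw [mul_comm (P (m + 1 + 1)) (P m)] at h2
    have hB' : Jg (P m * P (m + 1 + 1)) = -(Real.sqrt (π / 2) * dd (m + 1)) := hB
    rw [hB', hA] at h2
    rw [mul_comm (P (m + 1)) (P (m + 1 + 2))]
    have hg : Jg (P (m + 1 + 2) * P (m + 1)) =
        ((m : ℝ) + 1) * -(Real.sqrt (π / 2) * dd (m + 1))
          - ((m : ℝ) + 1 + 1) * (Real.sqrt (π / 2) * dd (m + 1)) := by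
      rw [h2]; push_cast; ring
    rw [hg]
    have hd2 : dd (m + 1 + 1) = (2 * ((m : ℝ) + 1) + 1) * dd (m + 1) := hd
    rw [hd2]
    ring

lemma Jg_diag (m : ℕ) : Jg (P m * P m) = Real.sqrt (π / 2) * dd m := by
  cases m with
  | zero => rw [P_zero, mul_one, Jg_one]; simp [dd]
  | succ m => exact (JAB m).1

lemma dd_eq : ∀ m : ℕ, dd m = (Nat.factorial (2 * m) : ℝ) / ((2 : ℝ) ^ m * (Nat.factorial m : ℝ))
  | 0 => by simp [dd]
  | (m + 1) => by
    rw [dd, dd_eq m]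
    have h2 : 2 * (m + 1) = (2 * m + 1) + 1 := by ring
    rw [h2, Nat.factorial_succ, Nat.factorial_succ, Nat.factorial_succ m]
    have hm : (Nat.factorial m : ℝ) ≠ 0 := Nat.cast_ne_zero.mpr (Nat.factorial_ne_zero m)
    have h2m : ((2 : ℝ)) ^ m ≠ 0 := by positivity
    push_cast
    field_simp
    ring

theorem gramA_diag (T : ℝ) (hT : 0 < T) (m : ℕ) :
    gramA T m m =
      T ^ (-(1 : ℝ) / 2) * (2 : ℝ) ^ (-(2 * (m : ℝ)) - 1 / 2) *
        (Nat.factorial (2 * m) : ℝ) / ((Nat.factorial m : ℝ) ^ 2) := by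
  have hsT : (0 : ℝ) < Real.sqrt T := Real.sqrt_pos.mpr hT
  have hpi := Real.pi_pos
  have hsqpi : (0 : ℝ) < Real.sqrt π := Real.sqrt_pos.mpr hpi
  set c1 : ℝ := T ^ (-(1 : ℝ) / 2) with hc1
  set c2 : ℝ := ((2 : ℝ) ^ m * (Nat.factorial m : ℝ) * Real.sqrt π) ^ (-(1 : ℝ) / 2) with hc2
  have key : ∀ v : ℝ, psi T m v * psi T m v
      = (c1 ^ 2 * c2 ^ 2) *
        ((fun x => (P m * P m).eval x * Real.exp (-2 * x ^ 2)) (v / Real.sqrt T)) := by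
    intro v
    simp only [psi, hermiteH_eq]
    have hv : (v / Real.sqrt T) ^ 2 = v ^ 2 / T := by
      rw [div_pow, Real.sq_sqrt hT.le]
    simp only [eval_mul, hv]
    have hexp : Real.exp (-2 * (v ^ 2 / T)) =
        Real.exp (-v ^ 2 / T) * Real.exp (-v ^ 2 / T) := by
      rw [← Real.exp_add]; ring_nf
    rw [hexp]
    ring
  have hint : gramA T m m = (c1 ^ 2 * c2 ^ 2) *
      ∫ v : ℝ, (fun x => (P m * P m).eval x * Real.exp (-2 * x ^ 2)) (v / Real.sqrt T) := by
    rw [gramA]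
    simp_rw [key]
    exact integral_const_mul _ _
  rw [hint, MeasureTheory.Measure.integral_comp_div
    (fun x => (P m * P m).eval x * Real.exp (-2 * x ^ 2)) (Real.sqrt T)]
  have : (∫ x : ℝ, (P m * P m).eval x * Real.exp (-2 * x ^ 2)) = Jg (P m * P m) := rfl
  rw [smul_eq_mul, this, Jg_diag, dd_eq, abs_of_pos hsT]
  -- now pure arithmetic
  have hfm : (0 : ℝ) < (Nat.factorial m : ℝ) := Nat.cast_pos.mpr (Nat.factorial_pos m)
  have hb : (0 : ℝ) < (2 : ℝ) ^ m * (Nat.factorial m : ℝ) * Real.sqrt π := by positivity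
  have h1 : c1 ^ 2 = T⁻¹ := by
    rw [hc1, ← Real.rpow_natCast (T ^ (-(1 : ℝ) / 2)) 2, ← Real.rpow_mul hT.le]
    norm_num [Real.rpow_neg_one]
  have h2 : c2 ^ 2 = ((2 : ℝ) ^ m * (Nat.factorial m : ℝ) * Real.sqrt π)⁻¹ := by
    rw [hc2, ← Real.rpow_natCast (((2:ℝ) ^ m * (Nat.factorial m : ℝ) * Real.sqrt π)
      ^ (-(1 : ℝ) / 2)) 2, ← Real.rpow_mul hb.le]
    norm_num [Real.rpow_neg_one]
  have h3 : Real.sqrt (π / 2) = Real.sqrt π / Real.sqrt 2 := by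
    rw [Real.sqrt_div hpi.le]
  have h4 : (2 : ℝ) ^ (-(2 * (m : ℝ)) - 1 / 2) = ((2 : ℝ) ^ (2 * m))⁻¹ * (Real.sqrt 2)⁻¹ := by
    rw [Real.rpow_sub (by norm_num : (0:ℝ) < 2), Real.rpow_neg (by norm_num : (0:ℝ) ≤ 2)]
    have : (2 * (m : ℝ)) = ((2 * m : ℕ) : ℝ) := by push_cast; ring
    rw [this, Real.rpow_natCast]
    rw [show ((1 : ℝ) / 2) = (2 : ℝ)⁻¹ from by norm_num]
    rw [← Real.rpow_natCast (2 : ℝ) (2 * m)]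
    congr 1
    rw [Real.sqrt_eq_rpow]
    norm_num
  have h5 : c1 = (Real.sqrt T)⁻¹ := by
    rw [hc1, neg_div, Real.rpow_neg hT.le, Real.sqrt_eq_rpow]
  have h6 : (2 : ℝ) ^ (2 * m) = (2 : ℝ) ^ m * (2 : ℝ) ^ m := by
    rw [two_mul, pow_add]
  have hTT : Real.sqrt T * Real.sqrt T = T := Real.mul_self_sqrt hT.le
  have hss : Real.sqrt 2 * Real.sqrt 2 = (2 : ℝ) := Real.mul_self_sqrt (by norm_num)
  have hpp : Real.sqrt π * Real.sqrt π = π := Real.mul_self_sqrt hpi.le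
  rw [h1, h2, h3, h4, h5, h6]
  have hs2 : (0:ℝ) < Real.sqrt 2 := Real.sqrt_pos.mpr (by norm_num)
  rw [← hTT]
  field_simp
  linear_combination Real.sq_sqrt (sq_nonneg (Real.sqrt T))
end

section
/- For all natural numbers m and n, the Gram coefficients satisfy a_{m,n} = (−1)^m · √( (m+n)! / (m! · n!) ) · a_{0, m+n}. -/
open Real MeasureTheory Matrix Filter

/-! ### Auxiliary development -/

/-- Physicists' Hermite polynomials as actual polynomials. -/
noncomputable def Hp : ℕ → Polynomial ℝ
  | 0 => 1
  | 1 => Polynomial.C 2 * Polynomial.X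
  | (n+2) => Polynomial.C 2 * Polynomial.X * Hp (n+1) - Polynomial.C (2*((n:ℝ)+1)) * Hp n

lemma Hp_succ_succ (n : ℕ) : Hp (n+2) = Polynomial.C 2 * Polynomial.X * Hp (n+1)
    - Polynomial.C (2*((n:ℝ)+1)) * Hp n := rfl

lemma Hp_eval (n : ℕ) (x : ℝ) : (Hp n).eval x = hermiteH n x := by
  induction n using Nat.twoStepInduction with
  | zero => simp [Hp, hermiteH]
  | one => simp [Hp, hermiteH]
  | more n ih1 ih2 =>
      show (Hp (n+2)).eval x = hermiteH (n+2) x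
      simp only [Hp, hermiteH, Polynomial.eval_sub, Polynomial.eval_mul, Polynomial.eval_C,
        Polynomial.eval_X, ih1, ih2]

lemma Hp_deriv : ∀ n : ℕ, (Hp (n+1)).derivative = Polynomial.C (2*((n:ℝ)+1)) * Hp n := by
  intro n
  induction n using Nat.twoStepInduction with
  | zero => simp [Hp]
  | one =>
      show (Hp 2).derivative = _
      rw [Hp_succ_succ]
      simp [Hp, map_ofNat]
      ring
  | more n ih1 ih2 =>
      show (Hp (n+3)).derivative = _
      rw [show n+3 = (n+1)+2 from rfl, Hp_succ_succ, Polynomial.derivative_sub,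
        Polynomial.derivative_mul, Polynomial.derivative_mul, Polynomial.derivative_mul, ih2, ih1]
      rw [Hp_succ_succ n]
      simp only [_root_.map_mul, _root_.map_add, _root_.map_one, map_ofNat, Polynomial.C_eq_natCast,
        Polynomial.derivative_X, Polynomial.derivative_C, Polynomial.derivative_ofNat,
        Polynomial.derivative_natCast, Polynomial.derivative_add, Polynomial.derivative_one,
        Polynomial.derivative_mul, Nat.cast_add, Nat.cast_one]
      ring

lemma integrable_monomial (k : ℕ) :
    Integrable (fun x : ℝ => Real.exp (-2*x^2) * x ^ k) := by
  have hg : Integrable (fun x : ℝ => ((k.factorial : ℝ) * Real.exp (1/4)) * Real.exp (-1*x^2)) :=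
    (integrable_exp_neg_mul_sq one_pos).const_mul _
  refine hg.mono' ?_ ?_
  · exact (((Real.continuous_exp.comp (by continuity)).mul (continuous_pow k))).aestronglyMeasurable
  · refine Filter.Eventually.of_forall (fun x => ?_)
    rw [Real.norm_eq_abs, abs_mul, abs_of_pos (Real.exp_pos _), abs_pow]
    have h1 : |x| ^ k ≤ (k.factorial : ℝ) * Real.exp |x| := by
      have h := Real.pow_div_factorial_le_exp (x := |x|) (abs_nonneg x) k
      rw [div_le_iff₀ (by positivity)] at h
      linarith [h]
    calc Real.exp (-2*x^2) * |x| ^ k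
        ≤ Real.exp (-2*x^2) * ((k.factorial : ℝ) * Real.exp |x|) := by
          exact mul_le_mul_of_nonneg_left h1 (Real.exp_pos _).le
      _ = (k.factorial : ℝ) * (Real.exp (-2*x^2) * Real.exp |x|) := by ring
      _ = (k.factorial : ℝ) * Real.exp (|x| - 2*x^2) := by rw [← Real.exp_add]; ring_nf
      _ ≤ (k.factorial : ℝ) * Real.exp (1/4 + -1*x^2) := by
          refine mul_le_mul_of_nonneg_left (Real.exp_le_exp.2 ?_) (by positivity)
          nlinarith [sq_nonneg (|x| - 1/2), sq_abs x]
      _ = (k.factorial : ℝ) * Real.exp (1/4) * Real.exp (-1*x^2) := by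
          rw [Real.exp_add]; ring

lemma integrable_L (p : Polynomial ℝ) :
    Integrable (fun x : ℝ => Real.exp (-2*x^2) * p.eval x) := by
  induction p using Polynomial.induction_on' with
  | add p q hp hq => simpa [mul_add] using (hp.add hq : Integrable (fun x : ℝ => Real.exp (-2*x^2) * p.eval x + Real.exp (-2*x^2) * q.eval x))
  | monomial n a =>
      have := (integrable_monomial n).const_mul a
      simpa [Polynomial.eval_monomial, mul_comm, mul_left_comm, mul_assoc] using this

/-- The Gaussian-weight linear functional. -/
noncomputable def L (p : Polynomial ℝ) : ℝ := ∫ x : ℝ, Real.exp (-2*x^2) * p.eval x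

lemma L_add (p q : Polynomial ℝ) : L (p + q) = L p + L q := by
  simp only [L, Polynomial.eval_add, mul_add]
  exact integral_add (integrable_L p) (integrable_L q)

lemma L_sub (p q : Polynomial ℝ) : L (p - q) = L p - L q := by
  simp only [L, Polynomial.eval_sub, mul_sub]
  exact integral_sub (integrable_L p) (integrable_L q)

lemma L_Cmul (a : ℝ) (p : Polynomial ℝ) : L (Polynomial.C a * p) = a * L p := by
  simp only [L, Polynomial.eval_mul, Polynomial.eval_C, ← MeasureTheory.integral_const_mul]
  congr 1; funext x; ring

lemma tendsto_top (p : Polynomial ℝ) :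
    Tendsto (fun x : ℝ => Real.exp (-2*x^2) * p.eval x) atTop (nhds 0) := by
  have hg : Tendsto (fun x : ℝ => |p.eval x / Real.exp x|) atTop (nhds 0) := by
    have := p.tendsto_div_exp_atTop
    simpa using this.abs
  apply squeeze_zero_norm' _ hg
  filter_upwards [eventually_ge_atTop (1 : ℝ)] with x hx
  rw [Real.norm_eq_abs, abs_mul, abs_of_pos (Real.exp_pos _), abs_div,
    abs_of_pos (Real.exp_pos _)]
  rw [div_eq_mul_inv, mul_comm, ← Real.exp_neg]
  refine mul_le_mul_of_nonneg_left ?_ (abs_nonneg _)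
  exact Real.exp_le_exp.2 (by nlinarith)

lemma tendsto_bot (p : Polynomial ℝ) :
    Tendsto (fun x : ℝ => Real.exp (-2*x^2) * p.eval x) atBot (nhds 0) := by
  have h := (tendsto_top (p.comp (-Polynomial.X))).comp tendsto_neg_atBot_atTop
  refine h.congr fun x => ?_
  simp [Function.comp, Polynomial.eval_comp]

lemma L_X_mul (p : Polynomial ℝ) :
    L (Polynomial.X * p) = (1/4) * L (Polynomial.derivative p) := by
  set q : Polynomial ℝ := Polynomial.derivative p - Polynomial.C 4 * (Polynomial.X * p) with hq
  have key : L q = 0 := by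
    have hderiv : ∀ x : ℝ, HasDerivAt (fun x : ℝ => Real.exp (-2*x^2) * p.eval x)
        (Real.exp (-2*x^2) * q.eval x) x := by
      intro x
      have he : HasDerivAt (fun x : ℝ => Real.exp (-2*x^2)) (Real.exp (-2*x^2) * (-2*(2*x))) x := by
        have h1 : HasDerivAt (fun x : ℝ => -2*x^2) (-2*(2*x)) x := by
          simpa using ((hasDerivAt_pow 2 x).const_mul (-2 : ℝ))
        exact h1.exp
      have hp := p.hasDerivAt x
      have := he.mul hp
      refine this.congr_deriv ?_
      simp [hq]
      ring
    have hint : Integrable (fun x : ℝ => Real.exp (-2*x^2) * q.eval x) := integrable_L q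
    have h0 := MeasureTheory.integral_of_hasDerivAt_of_tendsto hderiv hint
      (tendsto_bot p) (tendsto_top p)
    simpa [L] using h0
  rw [hq, L_sub, L_Cmul] at key
  linarith

lemma L_Hp_one : L (Hp 1) = 0 := by
  have h : (Hp 1 : Polynomial ℝ) = Polynomial.C 2 * (Polynomial.X * 1) := by
    simp [Hp]
  rw [h, L_Cmul, L_X_mul]
  simp [L]

lemma keyC (k : ℕ) : L (Hp (k+2)) = -((k:ℝ)+1) * L (Hp k) := by
  have h : (Hp (k+2) : Polynomial ℝ)
      = Polynomial.C 2 * (Polynomial.X * Hp (k+1)) - Polynomial.C (2*((k:ℝ)+1)) * Hp k := by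
    rw [Hp_succ_succ]; ring
  rw [h, L_sub, L_Cmul, L_Cmul, L_X_mul, Hp_deriv, L_Cmul]
  ring

lemma L_main : ∀ m n : ℕ, L (Hp m * Hp n) = (-1 : ℝ)^m * L (Hp (m+n)) := by
  intro m
  induction m using Nat.twoStepInduction with
  | zero => intro n; simp [Hp, L]
  | one =>
      intro n
      match n with
      | 0 =>
          have : (Hp 1 * Hp 0 : Polynomial ℝ) = Hp 1 := by simp [Hp]
          rw [this]
          simp [L_Hp_one]
      | (k+1) =>
          have h : (Hp 1 * Hp (k+1) : Polynomial ℝ)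
              = Polynomial.C 2 * (Polynomial.X * Hp (k+1)) := by
            simp [Hp]; ring
          rw [h, L_Cmul, L_X_mul, Hp_deriv, L_Cmul,
            show (1:ℕ) + (k+1) = k + 2 by ring, keyC]
          ring
  | more m ih1 ih2 =>
      intro n
      have h : (Hp (m+2) * Hp n : Polynomial ℝ)
          = Polynomial.C 2 * (Polynomial.X * (Hp (m+1) * Hp n))
            - Polynomial.C (2*((m:ℝ)+1)) * (Hp m * Hp n) := by
        rw [Hp_succ_succ]; ring
      rw [h, L_sub, L_Cmul, L_Cmul, L_X_mul, Polynomial.derivative_mul, Hp_deriv,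
        L_add]
      match n with
      | 0 =>
          have h0 : (Polynomial.derivative (Hp 0) : Polynomial ℝ) = 0 := by simp [Hp]
          rw [h0, mul_zero, mul_assoc, L_Cmul, ih1 0]
          have hL0 : L (0 : Polynomial ℝ) = 0 := by simp [L]
          rw [hL0, keyC]
          simp only [Nat.add_zero]
          ring
      | (k+1) =>
          rw [Hp_deriv k, mul_assoc, L_Cmul,
            show (Hp (m+1) * (Polynomial.C (2*((k:ℝ)+1)) * Hp k) : Polynomial ℝ)
              = Polynomial.C (2*((k:ℝ)+1)) * (Hp (m+1) * Hp k) by ring,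
            L_Cmul, ih1 (k+1), ih2 k,
            show m+1+k = m+k+1 by omega,
            show m+(k+1) = m+k+1 by omega,
            show m+2+(k+1) = (m+k+1)+2 by omega, keyC]
          push_cast
          ring

/-- The normalizing constants appearing in `psi`. -/
noncomputable def cst (m : ℕ) : ℝ :=
  ((2 : ℝ) ^ m * (Nat.factorial m : ℝ) * Real.sqrt Real.pi) ^ (-(1 : ℝ) / 2)

lemma Apos (m : ℕ) : (0:ℝ) < (2 : ℝ) ^ m * (Nat.factorial m : ℝ) * Real.sqrt Real.pi := by
  have := Real.sqrt_pos.2 Real.pi_pos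
  positivity

lemma sq_rpow_neg_half (a : ℝ) (ha : 0 < a) : (a ^ (-(1:ℝ)/2)) ^ 2 = a⁻¹ := by
  rw [← Real.rpow_natCast (a ^ (-(1:ℝ)/2)) 2, ← Real.rpow_mul ha.le]
  norm_num [Real.rpow_neg_one]

lemma cst_id (m n : ℕ) :
    cst m * cst n =
      Real.sqrt ((Nat.factorial (m + n) : ℝ) /
          ((Nat.factorial m : ℝ) * (Nat.factorial n : ℝ))) * (cst 0 * cst (m + n)) := by
  have hfm : (0:ℝ) < (Nat.factorial m : ℝ) := by positivity
  have hfn : (0:ℝ) < (Nat.factorial n : ℝ) := by exact_mod_cast Nat.cast_pos.2 (Nat.factorial_pos n)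
  have hfmn : (0:ℝ) < (Nat.factorial (m+n) : ℝ) := by
    exact_mod_cast Nat.cast_pos.2 (Nat.factorial_pos (m+n))
  have hsp : (0:ℝ) < Real.sqrt Real.pi := Real.sqrt_pos.2 Real.pi_pos
  have hX : (0:ℝ) ≤ cst m * cst n := by
    unfold cst; positivity
  have hY : (0:ℝ) ≤ Real.sqrt ((Nat.factorial (m + n) : ℝ) /
      ((Nat.factorial m : ℝ) * (Nat.factorial n : ℝ))) * (cst 0 * cst (m + n)) := by
    unfold cst; positivity
  have hsq : (cst m * cst n)^2 =
      (Real.sqrt ((Nat.factorial (m + n) : ℝ) /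
        ((Nat.factorial m : ℝ) * (Nat.factorial n : ℝ))) * (cst 0 * cst (m + n)))^2 := by
    rw [mul_pow, mul_pow, mul_pow]
    unfold cst
    rw [sq_rpow_neg_half _ (Apos m), sq_rpow_neg_half _ (Apos n),
      sq_rpow_neg_half _ (Apos 0), sq_rpow_neg_half _ (Apos (m+n)),
      Real.sq_sqrt (by positivity)]
    simp only [pow_zero, Nat.factorial_zero, Nat.cast_one, one_mul, pow_add]
    field_simp
  calc cst m * cst n = Real.sqrt ((cst m * cst n)^2) := (Real.sqrt_sq hX).symm
    _ = Real.sqrt ((Real.sqrt _ * (cst 0 * cst (m+n)))^2) := by rw [hsq]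
    _ = _ := Real.sqrt_sq hY

lemma gram_repr (T : ℝ) (hT : 0 < T) (m n : ℕ) :
    gramA T m n = (T ^ (-(1:ℝ)/2))^2 * Real.sqrt T * (cst m * cst n) * L (Hp m * Hp n) := by
  have hsT : (0:ℝ) < Real.sqrt T := Real.sqrt_pos.2 hT
  have hfun : ∀ v : ℝ, psi T m v * psi T n v =
      ((T ^ (-(1:ℝ)/2))^2 * (cst m * cst n)) *
        (Real.exp (-2*(v / Real.sqrt T)^2) * (Hp m * Hp n).eval (v / Real.sqrt T)) := by
    intro v
    have hsq : (v / Real.sqrt T)^2 = v^2 / T := by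
      rw [div_pow, Real.sq_sqrt hT.le]
    have hexp : Real.exp (-v^2/T) * Real.exp (-v^2/T) = Real.exp (-2*(v / Real.sqrt T)^2) := by
      rw [← Real.exp_add, hsq]
      congr 1; ring
    calc psi T m v * psi T n v
        = (T ^ (-(1:ℝ)/2))^2 * (cst m * cst n) *
            ((Real.exp (-v^2/T) * Real.exp (-v^2/T)) *
              (hermiteH m (v / Real.sqrt T) * hermiteH n (v / Real.sqrt T))) := by
          unfold psi cst; ring
      _ = _ := by
          rw [hexp, Polynomial.eval_mul, Hp_eval, Hp_eval]
  unfold gramA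
  simp only [hfun]
  rw [MeasureTheory.integral_const_mul]
  rw [MeasureTheory.Measure.integral_comp_div
    (fun u => Real.exp (-2*u^2) * (Hp m * Hp n).eval u) (Real.sqrt T)]
  rw [abs_of_pos hsT]
  show _ = _ * Real.sqrt T * _ * L (Hp m * Hp n)
  unfold L
  rw [smul_eq_mul]
  ring

theorem gramA_reduction_to_first_row (T : ℝ) (hT : 0 < T) (m n : ℕ) :
    gramA T m n =
      (-1 : ℝ) ^ m *
        Real.sqrt ((Nat.factorial (m + n) : ℝ) /
          ((Nat.factorial m : ℝ) * (Nat.factorial n : ℝ))) *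
        gramA T 0 (m + n) := by
  rw [gram_repr T hT m n, gram_repr T hT 0 (m+n), L_main m n]
  have h0 : L (Hp 0 * Hp (m+n)) = L (Hp (m+n)) := by
    rw [show (Hp 0 : Polynomial ℝ) = 1 from rfl, one_mul]
  rw [h0, cst_id m n]
  ring
end

section
/- For every integer N ≥ 1 and every nonzero real number e, the truncated matrices fail to satisfy the skew-symmetry relation: A^N · D^N + (D^N)ᵀ · A^N ≠ 0. -/
open Real MeasureTheory Matrix Filter

/-- Truncated transport matrix D^N. -/
noncomputable def Dmat (T : ℝ) (e : ℝ) (N : ℕ) : Matrix (Fin (N + 1)) (Fin (N + 1)) ℝ :=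
  fun m n => if (n : ℕ) + 1 = (m : ℕ) then -e * Real.sqrt (2 * (m : ℝ) / T) else 0

/-- Truncated Gram matrix A^N. -/
noncomputable def Amat (T : ℝ) (N : ℕ) : Matrix (Fin (N + 1)) (Fin (N + 1)) ℝ :=
  fun m n => gramA T (m : ℕ) (n : ℕ)

/-- Hermite polynomials as actual polynomials. -/
noncomputable def Pher : ℕ → Polynomial ℝ
  | 0 => 1
  | 1 => Polynomial.C 2 * Polynomial.X
  | (n + 2) => Polynomial.C 2 * Polynomial.X * Pher (n + 1)
      - Polynomial.C ((2 : ℝ) * (n + 1)) * Pher n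

lemma hermiteH_eq_eval : ∀ n x, hermiteH n x = (Pher n).eval x := by
  intro n
  induction n using Nat.strong_induction_on with
  | _ n ih =>
    match n with
    | 0 => intro x; simp [hermiteH, Pher]
    | 1 => intro x; simp [hermiteH, Pher]
    | (k + 2) =>
      intro x
      rw [hermiteH, Pher, ih (k + 1) (by omega), ih k (by omega)]
      simp only [Polynomial.eval_sub, Polynomial.eval_mul, Polynomial.eval_C,
        Polynomial.eval_X]
      try push_cast
      try ring

lemma Pher_deg_coeff (n : ℕ) : (Pher n).natDegree ≤ n ∧ (Pher n).coeff n = 2 ^ n := by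
  induction n using Nat.strong_induction_on with
  | _ n ih =>
    match n with
    | 0 => simp [Pher]
    | 1 =>
      constructor
      · simpa [Pher] using Polynomial.natDegree_C_mul_le (2:ℝ) Polynomial.X
      · simp [Pher]
    | (k + 2) =>
      obtain ⟨hd1, hc1⟩ := ih (k + 1) (by omega)
      obtain ⟨hd0, _⟩ := ih k (by omega)
      have hd : (Pher (k + 2)).natDegree ≤ k + 2 := by
        rw [Pher]
        refine (Polynomial.natDegree_sub_le _ _).trans ?_
        simp only [max_le_iff]
        constructor
        · calc (Polynomial.C (2:ℝ) * Polynomial.X * Pher (k + 1)).natDegree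
              ≤ (Polynomial.C (2:ℝ) * Polynomial.X).natDegree + (Pher (k + 1)).natDegree :=
                Polynomial.natDegree_mul_le
            _ ≤ 1 + (k + 1) := by
                gcongr
                simpa using Polynomial.natDegree_C_mul_le (2:ℝ) Polynomial.X
            _ = k + 2 := by omega
        · calc (Polynomial.C (2 * ((k:ℝ) + 1)) * Pher k).natDegree
              ≤ (Pher k).natDegree := Polynomial.natDegree_C_mul_le _ _
            _ ≤ k + 2 := by omega
      refine ⟨hd, ?_⟩
      rw [Pher]
      have h1 : (Polynomial.C (2:ℝ) * Polynomial.X * Pher (k + 1)).coeff (k + 2)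
          = 2 * (Pher (k + 1)).coeff (k + 1) := by
        rw [mul_assoc, Polynomial.coeff_C_mul, Polynomial.X_mul, Polynomial.coeff_mul_X]
      have h0 : (Pher k).coeff (k + 2) = 0 :=
        Polynomial.coeff_eq_zero_of_natDegree_lt (by omega)
      rw [Polynomial.coeff_sub, h1, hc1, Polynomial.coeff_C_mul, h0]
      ring

lemma Pher_ne_zero (n : ℕ) : Pher n ≠ 0 := by
  intro h
  have h2 := (Pher_deg_coeff n).2
  rw [h, Polynomial.coeff_zero] at h2
  exact pow_ne_zero n (two_ne_zero) h2.symm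

lemma integrable_poly_gauss {b : ℝ} (hb : 0 < b) (P : Polynomial ℝ) :
    Integrable (fun x : ℝ => P.eval x * Real.exp (-b * x ^ 2)) := by
  induction P using Polynomial.induction_on' with
  | add p q hp hq => simpa [add_mul, Pi.add_def] using hp.add hq
  | monomial n a =>
    simp only [Polynomial.eval_monomial]
    have h := integrable_rpow_mul_exp_neg_mul_sq hb (s := (n : ℝ))
      (lt_of_lt_of_le neg_one_lt_zero (Nat.cast_nonneg n))
    simp only [Real.rpow_natCast] at h
    simpa [mul_assoc] using h.const_mul a

lemma gramA_diag_pos {T : ℝ} (hT : 0 < T) (n : ℕ) : 0 < gramA T n n := by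
  have hsT : (0:ℝ) < Real.sqrt T := Real.sqrt_pos.mpr hT
  set c : ℝ := T ^ (-(1 : ℝ) / 2) *
    ((2 : ℝ) ^ n * (Nat.factorial n : ℝ) * Real.sqrt π) ^ (-(1 : ℝ) / 2) with hc
  have hcpos : 0 < c := by
    have h1 : (0:ℝ) < T ^ (-(1 : ℝ) / 2) := Real.rpow_pos_of_pos hT _
    have hb : (0:ℝ) < (2 : ℝ) ^ n * (Nat.factorial n : ℝ) * Real.sqrt π := by
      have : (0:ℝ) < Real.sqrt π := Real.sqrt_pos.mpr Real.pi_pos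
      positivity
    exact mul_pos h1 (Real.rpow_pos_of_pos hb _)
  have hform : ∀ v : ℝ, psi T n v = Real.exp (-(v / Real.sqrt T) ^ 2) * c *
      (Pher n).eval (v / Real.sqrt T) := by
    intro v
    have : (v / Real.sqrt T) ^ 2 = v ^ 2 / T := by
      rw [div_pow, Real.sq_sqrt hT.le]
    rw [psi, hermiteH_eq_eval, this, hc, neg_div]
    ring
  have hsq : ∀ v : ℝ, psi T n v * psi T n v =
      c ^ 2 * (((Pher n) ^ 2).eval (v / Real.sqrt T) *
        Real.exp (-2 * (v / Real.sqrt T) ^ 2)) := by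
    intro v
    rw [hform, Polynomial.eval_pow]
    have he : Real.exp (-(v / Real.sqrt T) ^ 2) * Real.exp (-(v / Real.sqrt T) ^ 2)
        = Real.exp (-2 * (v / Real.sqrt T) ^ 2) := by
      rw [← Real.exp_add]; ring_nf
    linear_combination c ^ 2 * Polynomial.eval (v / Real.sqrt T) (Pher n) ^ 2 * he
  have hint : Integrable (fun v => psi T n v * psi T n v) := by
    have h1 : Integrable (fun u : ℝ => ((Pher n) ^ 2).eval u * Real.exp (-2 * u ^ 2)) :=
      integrable_poly_gauss (by norm_num) _
    have h2 := (h1.comp_div hsT.ne').const_mul (c ^ 2)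
    exact h2.congr (Filter.Eventually.of_forall fun v => (hsq v).symm)
  rw [gramA]
  refine (integral_pos_iff_support_of_nonneg (fun v => mul_self_nonneg _) hint).mpr ?_
  -- support has positive measure
  have hfin : Set.Finite {v : ℝ | (Pher n).eval (v / Real.sqrt T) = 0} := by
    have hroots : Set.Finite {x : ℝ | (Pher n).IsRoot x} :=
      Polynomial.finite_setOf_isRoot (Pher_ne_zero n)
    have : {v : ℝ | (Pher n).eval (v / Real.sqrt T) = 0} =
        (fun x : ℝ => x * Real.sqrt T) '' {x : ℝ | (Pher n).IsRoot x} := by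
      ext v
      simp only [Set.mem_setOf_eq, Set.mem_image, Polynomial.IsRoot]
      constructor
      · intro h; exact ⟨v / Real.sqrt T, h, by field_simp⟩
      · rintro ⟨x, hx, rfl⟩; rwa [mul_div_cancel_right₀ _ hsT.ne']
    rw [this]; exact hroots.image _
  have hsub : {v : ℝ | (Pher n).eval (v / Real.sqrt T) = 0}ᶜ ⊆
      Function.support (fun v => psi T n v * psi T n v) := by
    intro v hv
    simp only [Set.mem_compl_iff, Set.mem_setOf_eq] at hv
    simp only [Function.mem_support]
    rw [hsq]
    have he : Real.exp (-2 * (v / Real.sqrt T) ^ 2) ≠ 0 := Real.exp_ne_zero _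
    have hp : ((Pher n) ^ 2).eval (v / Real.sqrt T) ≠ 0 := by
      rw [Polynomial.eval_pow]; exact pow_ne_zero _ hv
    positivity
  have hμ : volume {v : ℝ | (Pher n).eval (v / Real.sqrt T) = 0}ᶜ ≠ 0 := by
    intro h0
    have h1 : volume {v : ℝ | (Pher n).eval (v / Real.sqrt T) = 0} = 0 :=
      hfin.measure_zero _
    have : volume (Set.univ : Set ℝ) = 0 := by
      have := measure_union_le (μ := volume)
        {v : ℝ | (Pher n).eval (v / Real.sqrt T) = 0}
        {v : ℝ | (Pher n).eval (v / Real.sqrt T) = 0}ᶜ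
      rw [Set.union_compl_self, h0, h1] at this
      simpa using this
    simp at this
  calc (0 : ENNReal) < volume {v : ℝ | (Pher n).eval (v / Real.sqrt T) = 0}ᶜ :=
        pos_iff_ne_zero.mpr hμ
    _ ≤ volume (Function.support (fun v => psi T n v * psi T n v)) :=
        measure_mono hsub

theorem truncated_skew_symmetry_fails (T : ℝ) (hT : 0 < T) (N : ℕ) (hN : 1 ≤ N)
    (e : ℝ) (he : e ≠ 0) :
    Amat T N * Dmat T e N + (Dmat T e N)ᵀ * Amat T N ≠ 0 := by
  intro h
  -- evaluate at entry (N, N-1)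
  have hN1 : N - 1 < N + 1 := by omega
  have hNN : N < N + 1 := by omega
  set m : Fin (N + 1) := ⟨N, hNN⟩
  set n : Fin (N + 1) := ⟨N - 1, hN1⟩
  have hentry := congrFun (congrFun h m) n
  simp only [Matrix.add_apply, Matrix.mul_apply, Matrix.transpose_apply,
    Matrix.zero_apply] at hentry
  have h1 : ∑ k : Fin (N + 1), Amat T N m k * Dmat T e N k n
      = gramA T N N * (-e * Real.sqrt (2 * N / T)) := by
    rw [Finset.sum_eq_single m]
    · simp only [Dmat, Amat, m, n]
      have : (N - 1) + 1 = N := by omega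
      simp [this]
    · intro k _ hk
      have : ¬ ((n : ℕ) + 1 = (k : ℕ)) := by
        intro hcontra
        apply hk
        apply Fin.ext
        simp only [m]
        simp only [n] at hcontra
        omega
      simp [Dmat, this]
    · intro hcontra; exact absurd (Finset.mem_univ m) hcontra
  have h2 : ∑ k : Fin (N + 1), Dmat T e N k m * Amat T N k n = 0 := by
    apply Finset.sum_eq_zero
    intro k _
    have : ¬ ((m : ℕ) + 1 = (k : ℕ)) := by
      have := k.isLt
      simp only [m]
      omega
    simp [Dmat, this]
  rw [h1, h2, add_zero] at hentry
  have hgram : 0 < gramA T N N := gramA_diag_pos hT N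
  have hsq : 0 < Real.sqrt (2 * N / T) := by
    apply Real.sqrt_pos.mpr
    have : (0:ℝ) < (N:ℝ) := by exact_mod_cast hN
    positivity
  have : gramA T N N * (-e * Real.sqrt (2 * N / T)) ≠ 0 := by
    apply mul_ne_zero hgram.ne'
    exact mul_ne_zero (neg_ne_zero.mpr he) hsq.ne'
  exact this hentry
end
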